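/- arXiv:quant-ph/0406139 — 3 statements merged into one kernel-verified Lean document; each statement's English description precedes it below -/
import Mathlib

section
/- Let ψ₁, ψ₂ be an orthonormal basis of ℂ², Φ = ψ₁⊗ψ₁ + ψ₂⊗ψ₂, and ρ₁ = (1/4)|Φ⟩⟨Φ| + (1/4)(|ψ₁⟩⟨ψ₁| + |ψ₂⟩⟨ψ₂|) ⊗ |ψ₁⟩⟨ψ₁| on ℂ²⊗ℂ². Then with χ = ψ₁⊗ψ₁⊗ψ₁ + ψ₂⊗ψ₁⊗ψ₂, the matrix R = (1/4)|Φ⟩⟨Φ| ⊗ |ψ₁⟩⟨ψ₁| + (1/4)|χ⟩⟨χ| on ℂ²⊗ℂ²⊗ℂ² is positive semidefinite and its partial traces over the second and over the third tensor factor both equal ρ₁; consequently ρ₁ is a DSO state. -/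
open Matrix
open scoped Kronecker ComplexOrder

namespace BellPaper

variable {α β γ : Type*} [Fintype α] [Fintype β] [Fintype γ]

/-- Partial trace over the first factor of a threefold tensor product. -/
noncomputable def ptr1 (T : Matrix ((α × β) × γ) ((α × β) × γ) ℂ) :
    Matrix (β × γ) (β × γ) ℂ :=
  fun p q => ∑ i : α, T ((i, p.1), p.2) ((i, q.1), q.2)

/-- Partial trace over the second factor of a threefold tensor product. -/
noncomputable def ptr2 (T : Matrix ((α × β) × γ) ((α × β) × γ) ℂ) :
    Matrix (α × γ) (α × γ) ℂ :=
  fun p q => ∑ j : β, T ((p.1, j), p.2) ((q.1, j), q.2)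

/-- Partial trace over the third factor of a threefold tensor product. -/
noncomputable def ptr3 (T : Matrix ((α × β) × γ) ((α × β) × γ) ℂ) :
    Matrix (α × β) (α × β) ℂ :=
  fun p q => ∑ k : γ, T (p, k) (q, k)

/-- Partial trace over the second factor of a twofold tensor product. -/
noncomputable def ptrB (M : Matrix (α × β) (α × β) ℂ) : Matrix α α ℂ :=
  fun i i' => ∑ j : β, M (i, j) (i', j)

/-- A density matrix: positive semidefinite with unit trace. -/
def IsDensityMatrix {n : Type*} [Fintype n] (ρ : Matrix n n ℂ) : Prop :=
  ρ.PosSemidef ∧ ρ.trace = 1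

/-- Source-operator of type `T₁₂₂` for a state on ℂ^{d₁}⊗ℂ^{d₂}. -/
def IsSource122 {d₁ d₂ : ℕ} (ρ : Matrix (Fin d₁ × Fin d₂) (Fin d₁ × Fin d₂) ℂ)
    (T : Matrix ((Fin d₁ × Fin d₂) × Fin d₂) ((Fin d₁ × Fin d₂) × Fin d₂) ℂ) : Prop :=
  T.IsHermitian ∧ ptr2 T = ρ ∧ ptr3 T = ρ

/-- Source-operator of type `T₁₁₂` for a state on ℂ^{d₁}⊗ℂ^{d₂}. -/
def IsSource112 {d₁ d₂ : ℕ} (ρ : Matrix (Fin d₁ × Fin d₂) (Fin d₁ × Fin d₂) ℂ)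
    (S : Matrix ((Fin d₁ × Fin d₁) × Fin d₂) ((Fin d₁ × Fin d₁) × Fin d₂) ℂ) : Prop :=
  S.IsHermitian ∧ ptr1 S = ρ ∧ ptr2 S = ρ

/-- A DSO state: a density matrix admitting a positive semidefinite source-operator. -/
def IsDSO {d₁ d₂ : ℕ} (ρ : Matrix (Fin d₁ × Fin d₂) (Fin d₁ × Fin d₂) ℂ) : Prop :=
  IsDensityMatrix ρ ∧
    ((∃ T, T.PosSemidef ∧ IsSource122 ρ T) ∨ (∃ S, S.PosSemidef ∧ IsSource112 ρ S))

/-- A Bell class state: a density matrix admitting a density source-operator with the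
special dilation property (all three partial traces equal the state). -/
def IsBellClass {d : ℕ} (ρ : Matrix (Fin d × Fin d) (Fin d × Fin d) ℂ) : Prop :=
  IsDensityMatrix ρ ∧
    ∃ T : Matrix ((Fin d × Fin d) × Fin d) ((Fin d × Fin d) × Fin d) ℂ,
      T.PosSemidef ∧ ptr1 T = ρ ∧ ptr2 T = ρ ∧ ptr3 T = ρ

/-- The operator (spectral) norm of a matrix acting on a Euclidean space. -/
noncomputable def opNorm {n : Type*} [Fintype n] [DecidableEq n] (W : Matrix n n ℂ) : ℝ :=
  ‖Matrix.toEuclideanCLM (𝕜 := ℂ) W‖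

/-- The swap (permutation) operator `V_d` on ℂ^d ⊗ ℂ^d. -/
noncomputable def swapMat (d : ℕ) : Matrix (Fin d × Fin d) (Fin d × Fin d) ℂ :=
  fun p q => if p.1 = q.2 ∧ p.2 = q.1 then 1 else 0

/-- The Werner state on ℂ^d ⊗ ℂ^d. -/
noncomputable def werner (d : ℕ) : Matrix (Fin d × Fin d) (Fin d × Fin d) ℂ :=
  (((d : ℂ) + 1) / (d : ℂ) ^ 3) • (1 : Matrix (Fin d × Fin d) (Fin d × Fin d) ℂ)
    - ((d : ℂ) ^ 2)⁻¹ • swapMat d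

/-- The triple of indices of a point of the threefold product. -/
def triple {d : ℕ} (p : (Fin d × Fin d) × Fin d) : Fin 3 → Fin d := ![p.1.1, p.1.2, p.2]

/-- The unitary permuting the three tensor factors of ℂ^d ⊗ ℂ^d ⊗ ℂ^d according to π. -/
noncomputable def permMat (d : ℕ) (π : Equiv.Perm (Fin 3)) :
    Matrix ((Fin d × Fin d) × Fin d) ((Fin d × Fin d) × Fin d) ℂ :=
  fun p q => if ∀ i, triple p (π i) = triple q i then 1 else 0

/-- The antisymmetrization projection `Q_d^{(-)}` on ℂ^d ⊗ ℂ^d ⊗ ℂ^d. -/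
noncomputable def antisym (d : ℕ) :
    Matrix ((Fin d × Fin d) × Fin d) ((Fin d × Fin d) × Fin d) ℂ :=
  (6 : ℂ)⁻¹ • ∑ π : Equiv.Perm (Fin 3), (((Equiv.Perm.sign π : ℤ) : ℂ)) • permMat d π

/-- Tensor product of two vectors. -/
def tens {m n : Type*} (u : m → ℂ) (v : n → ℂ) : m × n → ℂ := fun p => u p.1 * v p.2

/-- The rank-one operator |v⟩⟨v|. -/
noncomputable def outer {n : Type*} (v : n → ℂ) : Matrix n n ℂ :=
  Matrix.vecMulVec v (star v)



section AuxPSD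
set_option linter.unusedSectionVars false

variable {m' n' : Type*} [Fintype m'] [Fintype n']

lemma outer_posSemidef (v : n' → ℂ) : (outer v).PosSemidef := by
  rw [posSemidef_iff_dotProduct_mulVec]
  constructor
  · ext i j
    simp [outer, Matrix.conjTranspose_apply, Matrix.vecMulVec_apply, mul_comm]
  · intro x
    have hmv : (outer v) *ᵥ x = (star v ⬝ᵥ x) • v := by
      funext i
      simp only [outer, Matrix.mulVec, Matrix.vecMulVec_apply, dotProduct, Pi.smul_apply,
        smul_eq_mul, Pi.star_apply, Finset.sum_mul]
      apply Finset.sum_congr rfl; intro j _; ring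
    rw [hmv, dotProduct_smul]
    have h2 : star x ⬝ᵥ v = star (star v ⬝ᵥ x) := by
      rw [star_dotProduct]
    rw [smul_eq_mul, h2]
    exact mul_star_self_nonneg _

lemma psd_add {A B : Matrix n' n' ℂ} (hA : A.PosSemidef) (hB : B.PosSemidef) :
    (A + B).PosSemidef := by
  refine posSemidef_iff_dotProduct_mulVec.mpr ⟨hA.1.add hB.1, fun x => ?_⟩
  rw [add_mulVec, dotProduct_add]
  exact add_nonneg (hA.dotProduct_mulVec_nonneg x) (hB.dotProduct_mulVec_nonneg x)

lemma psd_smul (r : ℝ) (hr : 0 ≤ r) {M : Matrix n' n' ℂ} (hM : M.PosSemidef) :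
    ((r : ℂ) • M).PosSemidef := by
  rw [posSemidef_iff_dotProduct_mulVec]
  constructor
  · show ((r : ℂ) • M)ᴴ = (r : ℂ) • M
    rw [conjTranspose_smul, hM.1]
    norm_num
  · intro x
    rw [smul_mulVec, dotProduct_smul, smul_eq_mul]
    exact mul_nonneg (by exact_mod_cast hr) (hM.dotProduct_mulVec_nonneg x)

lemma outer_kron (u : m' → ℂ) (v : n' → ℂ) : outer u ⊗ₖ outer v = outer (tens u v) := by
  ext p q
  simp [outer, tens, Matrix.vecMulVec_apply, Matrix.kroneckerMap_apply, star_mul']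
  ring

lemma trace_outer (v : n' → ℂ) : (outer v).trace = star v ⬝ᵥ v := by
  simp [outer, Matrix.trace, Matrix.vecMulVec_apply, dotProduct, Matrix.diag, mul_comm]

lemma dot_tens (a b : m' → ℂ) (c d : n' → ℂ) :
    star (tens a c) ⬝ᵥ tens b d = (star a ⬝ᵥ b) * (star c ⬝ᵥ d) := by
  simp only [dotProduct, Pi.star_apply, tens, star_mul', Fintype.sum_prod_type,
    Finset.sum_mul_sum]
  apply Finset.sum_congr rfl; intro i _
  apply Finset.sum_congr rfl; intro j _
  ring

end AuxPSD

/-- the state ρ₁ of (15) admits the density source-operator (17) of type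
`T₁₂₂`, hence ρ₁ is a DSO state. -/
theorem rho_one_isDSO (ψ₁ ψ₂ : Fin 2 → ℂ)
    (h11 : star ψ₁ ⬝ᵥ ψ₁ = 1) (h22 : star ψ₂ ⬝ᵥ ψ₂ = 1) (h12 : star ψ₁ ⬝ᵥ ψ₂ = 0)
    (Φ : Fin 2 × Fin 2 → ℂ) (hΦ : Φ = tens ψ₁ ψ₁ + tens ψ₂ ψ₂)
    (ρ₁ : Matrix (Fin 2 × Fin 2) (Fin 2 × Fin 2) ℂ)
    (hρ₁ : ρ₁ = (4 : ℂ)⁻¹ • outer Φ + (4 : ℂ)⁻¹ • ((outer ψ₁ + outer ψ₂) ⊗ₖ outer ψ₁))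
    (χ : (Fin 2 × Fin 2) × Fin 2 → ℂ) (hχ : χ = tens (tens ψ₁ ψ₁) ψ₁ + tens (tens ψ₂ ψ₁) ψ₂)
    (R : Matrix ((Fin 2 × Fin 2) × Fin 2) ((Fin 2 × Fin 2) × Fin 2) ℂ)
    (hRdef : R = (4 : ℂ)⁻¹ • (outer Φ ⊗ₖ outer ψ₁) + (4 : ℂ)⁻¹ • outer χ) :
    R.PosSemidef ∧ ptr2 R = ρ₁ ∧ ptr3 R = ρ₁ ∧ IsDSO ρ₁ := by
  -- pointwise orthonormality facts
  have h21 : star ψ₂ ⬝ᵥ ψ₁ = 0 := by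
    have := congrArg star h12
    rwa [star_dotProduct, star_star, star_zero] at this
  have H11 : star (ψ₁ 0) * ψ₁ 0 + star (ψ₁ 1) * ψ₁ 1 = 1 := by
    simpa [dotProduct, Fin.sum_univ_two] using h11
  have H22 : star (ψ₂ 0) * ψ₂ 0 + star (ψ₂ 1) * ψ₂ 1 = 1 := by
    simpa [dotProduct, Fin.sum_univ_two] using h22
  have H12 : star (ψ₁ 0) * ψ₂ 0 + star (ψ₁ 1) * ψ₂ 1 = 0 := by
    simpa [dotProduct, Fin.sum_univ_two] using h12
  have H21 : star (ψ₂ 0) * ψ₁ 0 + star (ψ₂ 1) * ψ₁ 1 = 0 := by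
    simpa [dotProduct, Fin.sum_univ_two] using h21
  -- positive semidefiniteness of R
  have hRalt : R = ((4⁻¹ : ℝ) : ℂ) • outer (tens Φ ψ₁) + ((4⁻¹ : ℝ) : ℂ) • outer χ := by
    rw [hRdef, outer_kron]; norm_num
  have hRpsd : R.PosSemidef := by
    rw [hRalt]
    exact psd_add (psd_smul _ (by norm_num) (outer_posSemidef _))
      (psd_smul _ (by norm_num) (outer_posSemidef _))
  -- partial trace over the third factor
  have hptr3 : ptr3 R = ρ₁ := by
    ext ⟨a, k⟩ ⟨b, l⟩
    simp only [ptr3, hRdef, hρ₁, hΦ, hχ, outer, Matrix.add_apply, Matrix.smul_apply,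
      Matrix.kroneckerMap_apply, Matrix.vecMulVec_apply, Pi.add_apply, Pi.star_apply,
      tens, star_add, star_mul', smul_eq_mul, Fin.sum_univ_two]
    ring_nf
    linear_combination (4⁻¹ * ((ψ₁ a * ψ₁ k + ψ₂ a * ψ₂ k) *
        (star (ψ₁ b) * star (ψ₁ l) + star (ψ₂ b) * star (ψ₂ l)) +
        (ψ₁ a * ψ₁ k) * (star (ψ₁ b) * star (ψ₁ l)))) * H11
      + (4⁻¹ * (ψ₂ a * ψ₁ k) * (star (ψ₂ b) * star (ψ₁ l))) * H22
      + (4⁻¹ * (ψ₂ a * ψ₁ k) * (star (ψ₁ b) * star (ψ₁ l))) * H12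
      + (4⁻¹ * (ψ₁ a * ψ₁ k) * (star (ψ₂ b) * star (ψ₁ l))) * H21
  -- partial trace over the second factor
  have hptr2 : ptr2 R = ρ₁ := by
    ext ⟨a, k⟩ ⟨b, l⟩
    simp only [ptr2, hRdef, hρ₁, hΦ, hχ, outer, Matrix.add_apply, Matrix.smul_apply,
      Matrix.kroneckerMap_apply, Matrix.vecMulVec_apply, Pi.add_apply, Pi.star_apply,
      tens, star_add, star_mul', smul_eq_mul, Fin.sum_univ_two]
    ring_nf
    linear_combination (4⁻¹ * (ψ₁ k * star (ψ₁ l)) * (ψ₁ a * star (ψ₁ b))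
        + 4⁻¹ * ((ψ₁ a * ψ₁ k + ψ₂ a * ψ₂ k) *
          (star (ψ₁ b) * star (ψ₁ l) + star (ψ₂ b) * star (ψ₂ l)))) * H11
      + (4⁻¹ * (ψ₁ k * star (ψ₁ l)) * (ψ₂ a * star (ψ₂ b))) * H22
      + (4⁻¹ * (ψ₁ k * star (ψ₁ l)) * (ψ₂ a * star (ψ₁ b))) * H12
      + (4⁻¹ * (ψ₁ k * star (ψ₁ l)) * (ψ₁ a * star (ψ₂ b))) * H21
  -- ρ₁ is a density matrix
  have hρalt : ρ₁ = ((4⁻¹ : ℝ) : ℂ) • outer Φ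
      + (((4⁻¹ : ℝ) : ℂ) • outer (tens ψ₁ ψ₁) + ((4⁻¹ : ℝ) : ℂ) • outer (tens ψ₂ ψ₁)) := by
    rw [hρ₁, Matrix.add_kronecker, outer_kron, outer_kron, smul_add]
    norm_num
  have hρpsd : ρ₁.PosSemidef := by
    rw [hρalt]
    exact psd_add (psd_smul _ (by norm_num) (outer_posSemidef _))
      (psd_add (psd_smul _ (by norm_num) (outer_posSemidef _))
        (psd_smul _ (by norm_num) (outer_posSemidef _)))
  have hΦΦ : star Φ ⬝ᵥ Φ = 2 := by
    rw [hΦ]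
    simp only [star_add, add_dotProduct, dotProduct_add, dot_tens, h11, h22, h12, h21]
    ring
  have htr : ρ₁.trace = 1 := by
    rw [hρalt]
    simp only [Matrix.trace_add, Matrix.trace_smul, trace_outer, hΦΦ, dot_tens, h11, h22]
    norm_num [smul_eq_mul]
  exact ⟨hRpsd, hptr2, hptr3, ⟨⟨hρpsd, htr⟩,
    Or.inl ⟨R, hRpsd, hRpsd.1, hptr2, hptr3⟩⟩⟩


end BellPaper
end

section
/- Let ψ₁, ψ₂ be an orthonormal basis of ℂ², Φ = ψ₁⊗ψ₁ + ψ₂⊗ψ₂, P_i = |ψ_i⟩⟨ψ_i|, and ρ₂ = (1/6)|Φ⟩⟨Φ| + (1/6)(P₁+P₂)⊗P₁ + (1/6)P₁⊗(P₁+P₂) on ℂ²⊗ℂ². Then with χ = ψ₁⊗ψ₁⊗ψ₁ + ψ₂⊗ψ₁⊗ψ₂ and χ' = ψ₁⊗ψ₁⊗ψ₁ + ψ₁⊗ψ₂⊗ψ₂, the matrix R = (1/6)|Φ⟩⟨Φ| ⊗ P₁ + (1/6)|χ⟩⟨χ| + (1/6)|χ'⟩⟨χ'| on ℂ²⊗ℂ²⊗ℂ²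 is positive semidefinite and its partial traces over each of the three tensor factors all equal ρ₂; consequently ρ₂ is a Bell class state. -/
open Matrix
open scoped Kronecker ComplexOrder

namespace BellPaper

variable {α β γ : Type*} [Fintype α] [Fintype β] [Fintype γ]

set_option linter.unusedSectionVars false
set_option maxHeartbeats 1000000

/-- Mixed rank-one operator |u⟩⟨v|. -/
noncomputable def out2 {n : Type*} (u v : n → ℂ) : Matrix n n ℂ := Matrix.vecMulVec u (star v)

lemma ptr1_out2 (u u' : α → ℂ) (a b : β → ℂ) (w w' : γ → ℂ) :
    ptr1 (out2 (tens (tens u a) w) (tens (tens u' b) w'))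
      = (star u' ⬝ᵥ u) • out2 (tens a w) (tens b w') := by
  ext p q
  simp only [ptr1, out2, vecMulVec_apply, tens, Pi.star_apply, star_mul', dotProduct,
    Matrix.smul_apply, smul_eq_mul, Finset.sum_mul]
  exact Finset.sum_congr rfl fun i _ => by ring

lemma ptr2_out2 (u u' : α → ℂ) (a b : β → ℂ) (w w' : γ → ℂ) :
    ptr2 (out2 (tens (tens u a) w) (tens (tens u' b) w'))
      = (star b ⬝ᵥ a) • out2 (tens u w) (tens u' w') := by
  ext p q
  simp only [ptr2, out2, vecMulVec_apply, tens, Pi.star_apply, star_mul', dotProduct,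
    Matrix.smul_apply, smul_eq_mul, Finset.sum_mul]
  exact Finset.sum_congr rfl fun i _ => by ring

lemma ptr3_out2 (u u' : α → ℂ) (a b : β → ℂ) (w w' : γ → ℂ) :
    ptr3 (out2 (tens (tens u a) w) (tens (tens u' b) w'))
      = (star w' ⬝ᵥ w) • out2 (tens u a) (tens u' b) := by
  ext p q
  simp only [ptr3, out2, vecMulVec_apply, tens, Pi.star_apply, star_mul', dotProduct,
    Matrix.smul_apply, smul_eq_mul, Finset.sum_mul]
  exact Finset.sum_congr rfl fun i _ => by ring

lemma ptr1_add (S T : Matrix ((α × β) × γ) ((α × β) × γ) ℂ) : ptr1 (S + T) = ptr1 S + ptr1 T := by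
  ext p q; simp [ptr1, Finset.sum_add_distrib]
lemma ptr2_add (S T : Matrix ((α × β) × γ) ((α × β) × γ) ℂ) : ptr2 (S + T) = ptr2 S + ptr2 T := by
  ext p q; simp [ptr2, Finset.sum_add_distrib]
lemma ptr3_add (S T : Matrix ((α × β) × γ) ((α × β) × γ) ℂ) : ptr3 (S + T) = ptr3 S + ptr3 T := by
  ext p q; simp [ptr3, Finset.sum_add_distrib]
lemma ptr1_smul (c : ℂ) (T : Matrix ((α × β) × γ) ((α × β) × γ) ℂ) : ptr1 (c • T) = c • ptr1 T := by
  ext p q; simp [ptr1, Finset.mul_sum]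
lemma ptr2_smul (c : ℂ) (T : Matrix ((α × β) × γ) ((α × β) × γ) ℂ) : ptr2 (c • T) = c • ptr2 T := by
  ext p q; simp [ptr2, Finset.mul_sum]
lemma ptr3_smul (c : ℂ) (T : Matrix ((α × β) × γ) ((α × β) × γ) ℂ) : ptr3 (c • T) = c • ptr3 T := by
  ext p q; simp [ptr3, Finset.mul_sum]

lemma trace_out2 {m n : Type*} [Fintype m] [Fintype n] (a c : m → ℂ) (b d : n → ℂ) :
    (out2 (tens a b) (tens c d)).trace = (star c ⬝ᵥ a) * (star d ⬝ᵥ b) := by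
  simp only [Matrix.trace, Matrix.diag, out2, vecMulVec_apply, tens, Pi.star_apply, star_mul',
    dotProduct, Fintype.sum_prod_type, Finset.sum_mul_sum]
  exact Finset.sum_congr rfl fun i _ => Finset.sum_congr rfl fun j _ => by ring

lemma outer_psd {n : Type*} [Fintype n] (v : n → ℂ) : (outer v).PosSemidef := by
  rw [posSemidef_iff_dotProduct_mulVec]
  constructor
  · ext i j
    simp [outer, vecMulVec_apply, conjTranspose_apply, mul_comm]
  · intro x
    have : dotProduct (star x) (outer v *ᵥ x) = star (star v ⬝ᵥ x) * (star v ⬝ᵥ x) := by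
      simp only [outer, dotProduct, mulVec, vecMulVec_apply, Pi.star_apply, star_sum, star_mul',
        star_star, Finset.mul_sum, Finset.sum_mul]
      rw [Finset.sum_comm]
      refine Finset.sum_congr rfl fun i _ => Finset.sum_congr rfl fun j _ => by ring
    rw [this]
    exact star_mul_self_nonneg _

lemma psd_smul6 {n : Type*} [Fintype n] {M : Matrix n n ℂ} (h : M.PosSemidef) :
    ((6 : ℂ)⁻¹ • M).PosSemidef := by
  have hc : (0 : ℂ) ≤ (6 : ℂ)⁻¹ := by
    rw [Complex.le_def]; norm_num
  rw [posSemidef_iff_dotProduct_mulVec]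
  constructor
  · rw [Matrix.IsHermitian, conjTranspose_smul, h.1]
    congr 1
    simp [Complex.ext_iff]
  · intro x
    rw [smul_mulVec, dotProduct_smul, smul_eq_mul]
    exact mul_nonneg hc ((posSemidef_iff_dotProduct_mulVec.mp h).2 x)


/-- the state ρ₂ of (16) admits the density source-operator (18) with the
special dilation property, hence ρ₂ is a Bell class state. -/
theorem rho_two_isBellClass (ψ₁ ψ₂ : Fin 2 → ℂ)
    (h11 : star ψ₁ ⬝ᵥ ψ₁ = 1) (h22 : star ψ₂ ⬝ᵥ ψ₂ = 1) (h12 : star ψ₁ ⬝ᵥ ψ₂ = 0)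
    (Φ : Fin 2 × Fin 2 → ℂ) (hΦ : Φ = tens ψ₁ ψ₁ + tens ψ₂ ψ₂)
    (ρ₂ : Matrix (Fin 2 × Fin 2) (Fin 2 × Fin 2) ℂ)
    (hρ₂ : ρ₂ = (6 : ℂ)⁻¹ • outer Φ
        + (6 : ℂ)⁻¹ • ((outer ψ₁ + outer ψ₂) ⊗ₖ outer ψ₁)
        + (6 : ℂ)⁻¹ • (outer ψ₁ ⊗ₖ (outer ψ₁ + outer ψ₂)))
    (χ χ' : (Fin 2 × Fin 2) × Fin 2 → ℂ)
    (hχ : χ = tens (tens ψ₁ ψ₁) ψ₁ + tens (tens ψ₂ ψ₁) ψ₂)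
    (hχ' : χ' = tens (tens ψ₁ ψ₁) ψ₁ + tens (tens ψ₁ ψ₂) ψ₂)
    (R : Matrix ((Fin 2 × Fin 2) × Fin 2) ((Fin 2 × Fin 2) × Fin 2) ℂ)
    (hRdef : R = (6 : ℂ)⁻¹ • (outer Φ ⊗ₖ outer ψ₁)
        + (6 : ℂ)⁻¹ • outer χ + (6 : ℂ)⁻¹ • outer χ') :
    R.PosSemidef ∧ ptr1 R = ρ₂ ∧ ptr2 R = ρ₂ ∧ ptr3 R = ρ₂ ∧ IsBellClass ρ₂ := by
  have h21 : star ψ₂ ⬝ᵥ ψ₁ = 0 := by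
    have h := congrArg star h12
    simpa [dotProduct, star_sum, star_mul', mul_comm] using h
  -- expanded form of ρ₂
  have hρ : ρ₂ = (6 : ℂ)⁻¹ • (out2 (tens ψ₁ ψ₁) (tens ψ₁ ψ₁) + out2 (tens ψ₁ ψ₁) (tens ψ₂ ψ₂)
      + out2 (tens ψ₂ ψ₂) (tens ψ₁ ψ₁) + out2 (tens ψ₂ ψ₂) (tens ψ₂ ψ₂)
      + out2 (tens ψ₁ ψ₁) (tens ψ₁ ψ₁) + out2 (tens ψ₂ ψ₁) (tens ψ₂ ψ₁)
      + out2 (tens ψ₁ ψ₁) (tens ψ₁ ψ₁) + out2 (tens ψ₁ ψ₂) (tens ψ₁ ψ₂)) := by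
    rw [hρ₂, hΦ]
    ext ⟨i, j⟩ ⟨k, l⟩
    simp only [outer, out2, Matrix.add_apply, Matrix.smul_apply, kroneckerMap_apply,
      vecMulVec_apply, tens, Pi.add_apply, Pi.star_apply, star_add, star_mul', smul_eq_mul]
    ring
  -- expanded form of R
  have hRe : R = (6 : ℂ)⁻¹ • (
        out2 (tens (tens ψ₁ ψ₁) ψ₁) (tens (tens ψ₁ ψ₁) ψ₁)
      + out2 (tens (tens ψ₁ ψ₁) ψ₁) (tens (tens ψ₂ ψ₂) ψ₁)
      + out2 (tens (tens ψ₂ ψ₂) ψ₁) (tens (tens ψ₁ ψ₁) ψ₁)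
      + out2 (tens (tens ψ₂ ψ₂) ψ₁) (tens (tens ψ₂ ψ₂) ψ₁)
      + out2 (tens (tens ψ₁ ψ₁) ψ₁) (tens (tens ψ₁ ψ₁) ψ₁)
      + out2 (tens (tens ψ₁ ψ₁) ψ₁) (tens (tens ψ₂ ψ₁) ψ₂)
      + out2 (tens (tens ψ₂ ψ₁) ψ₂) (tens (tens ψ₁ ψ₁) ψ₁)
      + out2 (tens (tens ψ₂ ψ₁) ψ₂) (tens (tens ψ₂ ψ₁) ψ₂)
      + out2 (tens (tens ψ₁ ψ₁) ψ₁) (tens (tens ψ₁ ψ₁) ψ₁)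
      + out2 (tens (tens ψ₁ ψ₁) ψ₁) (tens (tens ψ₁ ψ₂) ψ₂)
      + out2 (tens (tens ψ₁ ψ₂) ψ₂) (tens (tens ψ₁ ψ₁) ψ₁)
      + out2 (tens (tens ψ₁ ψ₂) ψ₂) (tens (tens ψ₁ ψ₂) ψ₂)) := by
    rw [hRdef, hΦ, hχ, hχ']
    ext ⟨⟨i, j⟩, k⟩ ⟨⟨l, m⟩, n⟩
    simp only [outer, out2, Matrix.add_apply, Matrix.smul_apply, kroneckerMap_apply,
      vecMulVec_apply, tens, Pi.add_apply, Pi.star_apply, star_add, star_mul', smul_eq_mul]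
    ring
  have hp1 : ptr1 R = ρ₂ := by
    rw [hRe, hρ]
    simp only [ptr1_smul, ptr1_add, ptr1_out2, h11, h22, h12, h21, one_smul, zero_smul,
      add_zero, zero_add]
    try module
  have hp2 : ptr2 R = ρ₂ := by
    rw [hRe, hρ]
    simp only [ptr2_smul, ptr2_add, ptr2_out2, h11, h22, h12, h21, one_smul, zero_smul,
      add_zero, zero_add]
    try module
  have hp3 : ptr3 R = ρ₂ := by
    rw [hRe, hρ]
    simp only [ptr3_smul, ptr3_add, ptr3_out2, h11, h22, h12, h21, one_smul, zero_smul,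
      add_zero, zero_add]
    try module
  -- R is positive semidefinite
  have hRpsd : R.PosSemidef := by
    have hform : R = (6 : ℂ)⁻¹ • (outer (tens Φ ψ₁) + (outer χ + outer χ')) := by
      rw [hRdef]
      ext ⟨⟨i, j⟩, k⟩ ⟨⟨l, m⟩, n⟩
      simp only [outer, Matrix.add_apply, Matrix.smul_apply, kroneckerMap_apply,
        vecMulVec_apply, tens, Pi.add_apply, Pi.star_apply, star_add, star_mul', smul_eq_mul]
      ring
    rw [hform]
    exact psd_smul6 ((outer_psd _).add ((outer_psd _).add (outer_psd _)))
  -- ρ₂ is positive semidefinite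
  have hρpsd : ρ₂.PosSemidef := by
    have hform : ρ₂ = (6 : ℂ)⁻¹ • (outer Φ + (outer (tens ψ₁ ψ₁) + outer (tens ψ₂ ψ₁))
        + (outer (tens ψ₁ ψ₁) + outer (tens ψ₁ ψ₂))) := by
      rw [hρ₂]
      ext ⟨i, j⟩ ⟨k, l⟩
      simp only [outer, Matrix.add_apply, Matrix.smul_apply, kroneckerMap_apply,
        vecMulVec_apply, tens, Pi.add_apply, Pi.star_apply, star_add, star_mul', smul_eq_mul]
      ring
    rw [hform]
    exact psd_smul6 (((outer_psd _).add ((outer_psd _).add (outer_psd _))).add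
      ((outer_psd _).add (outer_psd _)))
  have htr : ρ₂.trace = 1 := by
    rw [hρ]
    simp only [Matrix.trace_smul, Matrix.trace_add, trace_out2, h11, h22, h12, h21,
      smul_eq_mul]
    norm_num
  refine ⟨hRpsd, hp1, hp2, hp3, ⟨hρpsd, htr⟩, R, hRpsd, hp1, hp2, hp3⟩


end BellPaper
end

section
/- Let ρ be a density matrix on ℂ^{d₁}⊗ℂ^{d₂} and T a source-operator of type T₁₁₂ for ρ with T ≠ 0, and set σ_T = tr^{(3)}[|T|] / ‖T‖₁, a density matrix on ℂ^{d₁}⊗ℂ^{d₁}. Then for all Hermitian matrices A₁, A₂ on ℂ^{d₁} and W₂ on ℂ^{d₂} with operator norms at most 1: |tr[ρ(A₁⊗W₂)] − tr[ρ(A₂⊗W₂)]| ≤ ‖T‖₁ · (1 − tr[σ_T (A₁⊗A₂)]). -/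
open Matrix
open scoped Kronecker ComplexOrder

namespace BellPaper

variable {α β γ : Type*} [Fintype α] [Fintype β] [Fintype γ]

/-! ### Auxiliary lemmas for Statement 10 -/

section Aux

-- kronecker linearity
lemma sub_kron {m n p q : Type*} (A B : Matrix m n ℂ) (C : Matrix p q ℂ) :
    (A - B) ⊗ₖ C = A ⊗ₖ C - B ⊗ₖ C := by
  ext ⟨i,j⟩ ⟨k,l⟩; simp [Matrix.kroneckerMap_apply, sub_mul]

lemma kron_sub {m n p q : Type*} (A : Matrix m n ℂ) (B C : Matrix p q ℂ) :
    A ⊗ₖ (B - C) = A ⊗ₖ B - A ⊗ₖ C := by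
  ext ⟨i,j⟩ ⟨k,l⟩; simp [Matrix.kroneckerMap_apply, mul_sub]

lemma add_kron {m n p q : Type*} (A B : Matrix m n ℂ) (C : Matrix p q ℂ) :
    (A + B) ⊗ₖ C = A ⊗ₖ C + B ⊗ₖ C := by
  ext ⟨i,j⟩ ⟨k,l⟩; simp [Matrix.kroneckerMap_apply, add_mul]

lemma kron_add {m n p q : Type*} (A : Matrix m n ℂ) (B C : Matrix p q ℂ) :
    A ⊗ₖ (B + C) = A ⊗ₖ B + A ⊗ₖ C := by
  ext ⟨i,j⟩ ⟨k,l⟩; simp [Matrix.kroneckerMap_apply, mul_add]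

lemma psd_smul_half {n : Type*} [Fintype n] {M : Matrix n n ℂ} (hM : M.PosSemidef) :
    ((2⁻¹ : ℂ) • M).PosSemidef := by
  apply Matrix.PosSemidef.of_dotProduct_mulVec_nonneg
  · have := hM.1
    unfold Matrix.IsHermitian at *
    rw [conjTranspose_smul, this]
    norm_num
  · intro x
    rw [smul_mulVec, dotProduct_smul, smul_eq_mul]
    have h2 : (0:ℂ) ≤ 2⁻¹ := by
      rw [Complex.le_def]; norm_num
    exact mul_nonneg h2 (hM.dotProduct_mulVec_nonneg x)

lemma kron_conjTranspose {m n p q : Type*} (A : Matrix m n ℂ) (B : Matrix p q ℂ) :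
    (A ⊗ₖ B)ᴴ = Aᴴ ⊗ₖ Bᴴ := by
  ext ⟨i,j⟩ ⟨k,l⟩
  simp [Matrix.conjTranspose_apply, Matrix.kroneckerMap_apply, star_mul', mul_comm]

lemma psd_kron {m n : Type*} [Fintype m] [Fintype n] {A : Matrix m m ℂ} {B : Matrix n n ℂ}
    (hA : A.PosSemidef) (hB : B.PosSemidef) : (A ⊗ₖ B).PosSemidef := by
  obtain ⟨X, hX⟩ : ∃ X : Matrix m m ℂ, A = Xᴴ * X := by
    classical
    open scoped MatrixOrder Matrix.Norms.L2Operator in exact CStarAlgebra.nonneg_iff_eq_star_mul_self.mp hA.nonneg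
  obtain ⟨Y, hY⟩ : ∃ Y : Matrix n n ℂ, B = Yᴴ * Y := by
    classical
    open scoped MatrixOrder Matrix.Norms.L2Operator in exact CStarAlgebra.nonneg_iff_eq_star_mul_self.mp hB.nonneg
  rw [hX, hY, Matrix.mul_kronecker_mul, ← kron_conjTranspose]
  exact Matrix.posSemidef_conjTranspose_mul_self _

lemma trace_mul_psd_nonneg {n : Type*} [Fintype n] {A B : Matrix n n ℂ}
    (hA : A.PosSemidef) (hB : B.PosSemidef) : 0 ≤ (A * B).trace := by
  obtain ⟨C, hC⟩ : ∃ C : Matrix n n ℂ, B = Cᴴ * C := by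
    classical
    open scoped MatrixOrder Matrix.Norms.L2Operator in exact CStarAlgebra.nonneg_iff_eq_star_mul_self.mp hB.nonneg
  rw [hC, ← Matrix.mul_assoc, Matrix.trace_mul_comm]
  have key : ∀ i, (C * (A * Cᴴ)) i i
      = star (fun j => star (C i j)) ⬝ᵥ A *ᵥ (fun j => star (C i j)) := by
    intro i
    simp only [Matrix.mul_apply, Matrix.conjTranspose_apply, dotProduct,
      Matrix.mulVec, Pi.star_apply, star_star, Finset.mul_sum]
  rw [Matrix.trace]
  apply Finset.sum_nonneg
  intro i _
  rw [Matrix.diag_apply, key i]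
  exact hA.dotProduct_mulVec_nonneg _

lemma herm_dot_real {n : Type*} [Fintype n] [DecidableEq n] {W : Matrix n n ℂ}
    (hW : W.IsHermitian) (x : n → ℂ) :
    (starRingEnd ℂ) (star x ⬝ᵥ W *ᵥ x) = star x ⬝ᵥ W *ᵥ x := by
  rw [starRingEnd_apply, ← Matrix.star_dotProduct, Matrix.star_mulVec,
    ← Matrix.dotProduct_mulVec, hW.eq]

lemma dot_norm_le {n : Type*} [Fintype n] [DecidableEq n] (W : Matrix n n ℂ)
    (hn : opNorm W ≤ 1) (x : n → ℂ) :
    ‖star x ⬝ᵥ W *ᵥ x‖ ≤ (star x ⬝ᵥ x).re := by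
  set y := WithLp.toLp 2 x with hy
  have h1 : star x ⬝ᵥ W *ᵥ x = inner (𝕜 := ℂ) y (Matrix.toEuclideanCLM (𝕜 := ℂ) W y) := by
    rw [hy, Matrix.toEuclideanCLM_toLp, EuclideanSpace.inner_toLp_toLp, dotProduct_comm]
  have h2 : (star x ⬝ᵥ x).re = ‖y‖ ^ 2 := by
    have : (inner (𝕜 := ℂ) y y) = star x ⬝ᵥ x := by
      rw [hy, EuclideanSpace.inner_toLp_toLp, dotProduct_comm]
    rw [← this, inner_self_eq_norm_sq_to_K]
    norm_cast
  rw [h1, h2]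
  calc ‖inner (𝕜 := ℂ) y (Matrix.toEuclideanCLM (𝕜 := ℂ) W y)‖
      ≤ ‖y‖ * ‖Matrix.toEuclideanCLM (𝕜 := ℂ) W y‖ := norm_inner_le_norm _ _
    _ ≤ ‖y‖ * (opNorm W * ‖y‖) := by
        gcongr
        exact ContinuousLinearMap.le_opNorm _ _
    _ ≤ ‖y‖ * (1 * ‖y‖) := by
        have : (0:ℝ) ≤ ‖y‖ := norm_nonneg _
        gcongr
    _ = ‖y‖ ^ 2 := by ring

lemma one_sub_psd {n : Type*} [Fintype n] [DecidableEq n] {W : Matrix n n ℂ}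
    (hW : W.IsHermitian) (hn : opNorm W ≤ 1) : (1 - W).PosSemidef := by
  apply Matrix.PosSemidef.of_dotProduct_mulVec_nonneg
  · unfold Matrix.IsHermitian at *
    simp [Matrix.conjTranspose_sub, hW]
  · intro x
    have hq := herm_dot_real hW x
    have habs := dot_norm_le W hn x
    have hp : (0:ℂ) ≤ star x ⬝ᵥ (1:Matrix n n ℂ) *ᵥ x := Matrix.PosSemidef.one.dotProduct_mulVec_nonneg x
    rw [Matrix.sub_mulVec, dotProduct_sub]
    rw [Complex.le_def] at hp ⊢
    have hqim : (star x ⬝ᵥ W *ᵥ x).im = 0 := by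
      have h := congrArg Complex.im hq
      simp only [Complex.conj_im] at h
      linarith
    have hone : star x ⬝ᵥ (1:Matrix n n ℂ) *ᵥ x = star x ⬝ᵥ x := by
      rw [Matrix.one_mulVec]
    rw [hone] at hp
    constructor
    · have hre : (star x ⬝ᵥ W *ᵥ x).re ≤ ‖star x ⬝ᵥ W *ᵥ x‖ := Complex.re_le_norm _
      simp only [Complex.sub_re, Complex.zero_re]
      rw [hone]
      linarith
    · simp only [Complex.sub_im, Complex.zero_im]
      rw [hone, hqim, ← hp.2]
      simp

lemma one_add_psd {n : Type*} [Fintype n] [DecidableEq n] {W : Matrix n n ℂ}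
    (hW : W.IsHermitian) (hn : opNorm W ≤ 1) : (1 + W).PosSemidef := by
  have h1 : (1 - (-W)).PosSemidef := by
    apply one_sub_psd
    · unfold Matrix.IsHermitian at *
      simp [hW]
    · have h : Matrix.toEuclideanCLM (𝕜 := ℂ) (-W) = -(Matrix.toEuclideanCLM (𝕜 := ℂ) W) := by
        simp
      unfold opNorm at *
      rw [h, norm_neg]
      exact hn
  simpa [sub_neg_eq_add] using h1

lemma conj_diag_psd {n : Type*} [Fintype n] [DecidableEq n] {A : Matrix n n ℂ}
    (hA : A.IsHermitian) (f : n → ℝ) (hf : ∀ i, 0 ≤ f i) :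
    Matrix.PosSemidef ((hA.eigenvectorUnitary : Matrix n n ℂ) *
      Matrix.diagonal (fun i => (f i : ℂ)) *
      (star hA.eigenvectorUnitary : Matrix n n ℂ)) := by
  apply Matrix.PosSemidef.mul_mul_conjTranspose_same
  refine Matrix.posSemidef_diagonal_iff.mpr fun i => ?_
  rw [Complex.le_def]
  simp [hf i]

lemma udu_mul {n : Type*} [Fintype n] [DecidableEq n] {U : Matrix n n ℂ}
    (hU : U ∈ Matrix.unitaryGroup n ℂ) (f g : n → ℂ) :
    (U * Matrix.diagonal f * star U) * (U * Matrix.diagonal g * star U)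
      = U * Matrix.diagonal (fun i => f i * g i) * star U := by
  have h : star U * U = 1 := hU.1
  have e : (U * Matrix.diagonal f * star U) * (U * Matrix.diagonal g * star U)
      = U * (Matrix.diagonal f * ((star U * U) * Matrix.diagonal g)) * star U := by
    noncomm_ring
  rw [e, h, one_mul, Matrix.diagonal_mul_diagonal]

lemma udu_trace {n : Type*} [Fintype n] [DecidableEq n] {U : Matrix n n ℂ}
    (hU : U ∈ Matrix.unitaryGroup n ℂ) (f : n → ℂ) :
    (U * Matrix.diagonal f * star U).trace = ∑ i, f i := by
  have h : star U * U = 1 := hU.1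
  rw [Matrix.trace_mul_cycle, h, one_mul, Matrix.trace_diagonal]

lemma abs_parts {n : Type*} [Fintype n] [DecidableEq n] {S Sabs : Matrix n n ℂ}
    (hS : S.IsHermitian) (hP : Sabs.PosSemidef) (hsq : Sabs * Sabs = S * S) :
    (Sabs - S).PosSemidef ∧ (Sabs + S).PosSemidef ∧
      (S ≠ 0 → 0 < Sabs.trace.re) ∧ Sabs.trace.im = 0 := by
  set U : Matrix n n ℂ := (hS.eigenvectorUnitary : Matrix n n ℂ) with hUdef
  have hUm : U ∈ Matrix.unitaryGroup n ℂ := hS.eigenvectorUnitary.2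
  set lam := hS.eigenvalues with hlam
  have hspec : S = U * Matrix.diagonal (fun i => ((lam i : ℝ) : ℂ)) * star U := by
    have h := hS.spectral_theorem
    rw [Unitary.conjStarAlgAut_apply] at h
    exact h
  set B := U * Matrix.diagonal (fun i => ((|lam i| : ℝ) : ℂ)) * star U with hBdef
  have hB : B.PosSemidef := conj_diag_psd hS _ (fun i => abs_nonneg _)
  have hBB : B * B = S * S := by
    rw [hBdef, hspec, udu_mul hUm, udu_mul hUm]
    have hfun : (fun i => ((|lam i| : ℝ) : ℂ) * ((|lam i| : ℝ) : ℂ))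
        = (fun i => ((lam i : ℝ) : ℂ) * ((lam i : ℝ) : ℂ)) := by
      funext i
      rw [← Complex.ofReal_mul, ← Complex.ofReal_mul, abs_mul_abs_self]
    rw [hfun]
  have hSabsB : Sabs = B := by
    open scoped MatrixOrder Matrix.Norms.L2Operator in
    exact (CFC.mul_self_eq_mul_self_iff Sabs B hP.nonneg hB.nonneg).mp (by rw [hsq, hBB])
  have hdiff : ∀ g : n → ℂ,
      U * Matrix.diagonal (fun i => ((|lam i| : ℝ) : ℂ)) * star U
        - U * Matrix.diagonal g * star U
      = U * Matrix.diagonal (fun i => ((|lam i| : ℝ) : ℂ) - g i) * star U := by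
    intro g
    rw [← Matrix.diagonal_sub]
    noncomm_ring
  have hsum : ∀ g : n → ℂ,
      U * Matrix.diagonal (fun i => ((|lam i| : ℝ) : ℂ)) * star U
        + U * Matrix.diagonal g * star U
      = U * Matrix.diagonal (fun i => ((|lam i| : ℝ) : ℂ) + g i) * star U := by
    intro g
    rw [← Matrix.diagonal_add]
    noncomm_ring
  refine ⟨?_, ?_, ?_, ?_⟩
  · rw [hSabsB, hspec, hBdef, hdiff]
    have e : (fun i => ((|lam i| : ℝ) : ℂ) - ((lam i : ℝ) : ℂ))
        = fun i => (((|lam i| - lam i : ℝ) : ℝ) : ℂ) := by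
      funext i; push_cast; ring
    rw [e]
    exact conj_diag_psd hS _ (fun i => by simp [abs_nonneg, le_abs_self])
  · rw [hSabsB, hspec, hBdef, hsum]
    have e : (fun i => ((|lam i| : ℝ) : ℂ) + ((lam i : ℝ) : ℂ))
        = fun i => (((|lam i| + lam i : ℝ) : ℝ) : ℂ) := by
      funext i; push_cast; ring
    rw [e]
    exact conj_diag_psd hS _ (fun i => by
      have := neg_abs_le (lam i); linarith)
  · intro hS0
    have htr : Sabs.trace = ∑ i, ((|lam i| : ℝ) : ℂ) := by
      rw [hSabsB, hBdef, udu_trace hUm]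
    have h2 : Sabs.trace.re = ∑ i, |lam i| := by
      rw [htr]; simp [Complex.re_sum]
    rw [h2]
    rcases (Finset.sum_nonneg (fun i _ => abs_nonneg (lam i))).lt_or_eq with h | h
    · exact h
    · exfalso
      apply hS0
      have hall : ∀ i, lam i = 0 := by
        intro i
        have := Finset.sum_eq_zero_iff_of_nonneg
          (fun j (_ : j ∈ Finset.univ) => abs_nonneg (lam j)) |>.mp h.symm i (Finset.mem_univ i)
        exact abs_eq_zero.mp this
      rw [hspec]
      have e : (fun i => ((lam i : ℝ) : ℂ)) = fun _ => (0 : ℂ) := by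
        funext i; rw [hall i]; simp
      rw [e]
      simp [Matrix.diagonal_zero]
  · have htr : Sabs.trace = ∑ i, ((|lam i| : ℝ) : ℂ) := by
      rw [hSabsB, hBdef, udu_trace hUm]
    rw [htr]
    simp [Complex.im_sum]

lemma trace_ptr2_mul [DecidableEq β] (S : Matrix ((α × β) × γ) ((α × β) × γ) ℂ)
    (A : Matrix α α ℂ) (W : Matrix γ γ ℂ) :
    (ptr2 S * (A ⊗ₖ W)).trace = (S * ((A ⊗ₖ (1 : Matrix β β ℂ)) ⊗ₖ W)).trace := by
  simp only [Matrix.trace, Matrix.diag_apply, Matrix.mul_apply, ptr2,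
    Matrix.kroneckerMap_apply, Matrix.one_apply, Fintype.sum_prod_type,
    Finset.sum_mul, Finset.mul_sum, mul_ite, ite_mul, mul_zero, zero_mul, mul_one,
    Finset.sum_ite_eq, Finset.sum_ite_eq', Finset.mem_univ, if_true]
  conv_rhs => enter [2, x, 2, x1, 2, x2, 2, x3]; rw [Finset.sum_comm]
  simp only [Finset.sum_ite_eq', Finset.mem_univ, if_true]
  conv_rhs => enter [2, x]; rw [Finset.sum_comm]
  conv_rhs => enter [2, x, 2, x2]; rw [Finset.sum_comm]
  conv_rhs => enter [2, x, 2, x2, 2, x3]; rw [Finset.sum_comm]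

lemma trace_ptr1_mul [DecidableEq α] (S : Matrix ((α × β) × γ) ((α × β) × γ) ℂ)
    (B : Matrix β β ℂ) (W : Matrix γ γ ℂ) :
    (ptr1 S * (B ⊗ₖ W)).trace = (S * (((1 : Matrix α α ℂ) ⊗ₖ B) ⊗ₖ W)).trace := by
  simp only [Matrix.trace, Matrix.diag_apply, Matrix.mul_apply, ptr1,
    Matrix.kroneckerMap_apply, Matrix.one_apply, Fintype.sum_prod_type,
    Finset.sum_mul, Finset.mul_sum, mul_ite, ite_mul, mul_zero, zero_mul, one_mul,
    Finset.sum_ite_eq, Finset.sum_ite_eq', Finset.mem_univ, if_true]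
  conv_rhs => enter [2, x, 2, x1, 2, x2]; rw [Finset.sum_comm]
  conv_rhs => enter [2, x, 2, x1, 2, x2, 2, x4]; rw [Finset.sum_comm]
  simp only [Finset.sum_ite_eq', Finset.mem_univ, if_true]
  conv_rhs => rw [Finset.sum_comm]
  conv_rhs => enter [2, x1]; rw [Finset.sum_comm]
  conv_rhs => enter [2, x1, 2, x2]; rw [Finset.sum_comm]
  conv_rhs => enter [2, x1, 2, x2, 2, x3]; rw [Finset.sum_comm]

lemma trace_ptr3_mul [DecidableEq γ] (M : Matrix ((α × β) × γ) ((α × β) × γ) ℂ)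
    (K : Matrix (α × β) (α × β) ℂ) :
    (ptr3 M * K).trace = (M * (K ⊗ₖ (1 : Matrix γ γ ℂ))).trace := by
  simp only [Matrix.trace, Matrix.diag_apply, Matrix.mul_apply, ptr3,
    Matrix.kroneckerMap_apply, Matrix.one_apply, Fintype.sum_prod_type,
    Finset.sum_mul, Finset.mul_sum, mul_ite, ite_mul, mul_zero, zero_mul, mul_one,
    Finset.sum_ite_eq, Finset.sum_ite_eq', Finset.mem_univ, if_true]
  conv_rhs => enter [2, x, 2, y]; rw [Finset.sum_comm]
  conv_rhs => enter [2, x, 2, y, 2, x2]; rw [Finset.sum_comm]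

end Aux

/-- the quantum Bell-form inequality (21) with a source-operator of type
`T₁₁₂`. `Sabs` is the absolute value |S|, `Sabs.trace` the trace norm ‖S‖₁ and
`(Sabs.trace)⁻¹ • ptr3 Sabs` the density matrix `σ_S`. -/
theorem bell_form_inequality_112 {d₁ d₂ : ℕ}
    (ρ : Matrix (Fin d₁ × Fin d₂) (Fin d₁ × Fin d₂) ℂ) (hρ : IsDensityMatrix ρ)
    (S Sabs : Matrix ((Fin d₁ × Fin d₁) × Fin d₂) ((Fin d₁ × Fin d₁) × Fin d₂) ℂ)
    (hS : IsSource112 ρ S) (hS0 : S ≠ 0)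
    (habs : Sabs.PosSemidef ∧ Sabs * Sabs = S * S)
    (A₁ A₂ : Matrix (Fin d₁) (Fin d₁) ℂ) (W₂ : Matrix (Fin d₂) (Fin d₂) ℂ)
    (hA₁ : A₁.IsHermitian) (hA₂ : A₂.IsHermitian) (hW₂ : W₂.IsHermitian)
    (hnA₁ : opNorm A₁ ≤ 1) (hnA₂ : opNorm A₂ ≤ 1) (hnW₂ : opNorm W₂ ≤ 1) :
    ‖(ρ * (A₁ ⊗ₖ W₂)).trace - (ρ * (A₂ ⊗ₖ W₂)).trace‖
      ≤ Sabs.trace.re *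
        (1 - (((Sabs.trace)⁻¹ • ptr3 Sabs * (A₁ ⊗ₖ A₂)).trace).re) := by
  classical
  obtain ⟨hSH, hptr1S, hptr2S⟩ := hS
  obtain ⟨habsP, habsSq⟩ := habs
  set X : Matrix ((Fin d₁ × Fin d₁) × Fin d₂) ((Fin d₁ × Fin d₁) × Fin d₂) ℂ :=
    (A₁ ⊗ₖ (1 : Matrix (Fin d₁) (Fin d₁) ℂ)) ⊗ₖ W₂ - ((1 : Matrix (Fin d₁) (Fin d₁) ℂ) ⊗ₖ A₂) ⊗ₖ W₂ with hX
  set Y : Matrix ((Fin d₁ × Fin d₁) × Fin d₂) ((Fin d₁ × Fin d₁) × Fin d₂) ℂ :=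
    ((1 : Matrix (Fin d₁ × Fin d₁) (Fin d₁ × Fin d₁) ℂ) - A₁ ⊗ₖ A₂) ⊗ₖ (1 : Matrix (Fin d₂) (Fin d₂) ℂ) with hY
  -- Step 1 : rewrite the LHS difference as tr (S * X)
  have hz : (ρ * (A₁ ⊗ₖ W₂)).trace - (ρ * (A₂ ⊗ₖ W₂)).trace = (S * X).trace := by
    have e1 : (ρ * (A₁ ⊗ₖ W₂)).trace
        = (S * ((A₁ ⊗ₖ (1 : Matrix (Fin d₁) (Fin d₁) ℂ)) ⊗ₖ W₂)).trace := by
      rw [← hptr2S]; exact trace_ptr2_mul S A₁ W₂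
    have e2 : (ρ * (A₂ ⊗ₖ W₂)).trace
        = (S * (((1 : Matrix (Fin d₁) (Fin d₁) ℂ) ⊗ₖ A₂) ⊗ₖ W₂)).trace := by
      rw [← hptr1S]; exact trace_ptr1_mul S A₂ W₂
    rw [e1, e2, hX, Matrix.mul_sub, Matrix.trace_sub]
  -- PSD building blocks
  have hA1m := one_sub_psd hA₁ hnA₁
  have hA1p := one_add_psd hA₁ hnA₁
  have hA2m := one_sub_psd hA₂ hnA₂
  have hA2p := one_add_psd hA₂ hnA₂
  have hW2m := one_sub_psd hW₂ hnW₂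
  have hW2p := one_add_psd hW₂ hnW₂
  have hYmX : (Y - X).PosSemidef := by
    have hdec : Y - X
        = (2⁻¹ : ℂ) • ((((1 : Matrix (Fin d₁) (Fin d₁) ℂ) - A₁) ⊗ₖ ((1 : Matrix (Fin d₁) (Fin d₁) ℂ) + A₂)) ⊗ₖ
            ((1 : Matrix (Fin d₂) (Fin d₂) ℂ) + W₂))
          + (2⁻¹ : ℂ) • ((((1 : Matrix (Fin d₁) (Fin d₁) ℂ) + A₁) ⊗ₖ ((1 : Matrix (Fin d₁) (Fin d₁) ℂ) - A₂)) ⊗ₖ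
            ((1 : Matrix (Fin d₂) (Fin d₂) ℂ) - W₂)) := by
      rw [hY, hX]
      simp only [sub_kron, kron_sub, add_kron, kron_add, Matrix.one_kronecker_one]
      module
    rw [hdec]
    exact ((psd_smul_half (psd_kron (psd_kron hA1m hA2p) hW2p)).add
      (psd_smul_half (psd_kron (psd_kron hA1p hA2m) hW2m)))
  have hYpX : (Y + X).PosSemidef := by
    have hdec : Y + X
        = (2⁻¹ : ℂ) • ((((1 : Matrix (Fin d₁) (Fin d₁) ℂ) + A₁) ⊗ₖ ((1 : Matrix (Fin d₁) (Fin d₁) ℂ) - A₂)) ⊗ₖ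
            ((1 : Matrix (Fin d₂) (Fin d₂) ℂ) + W₂))
          + (2⁻¹ : ℂ) • ((((1 : Matrix (Fin d₁) (Fin d₁) ℂ) - A₁) ⊗ₖ ((1 : Matrix (Fin d₁) (Fin d₁) ℂ) + A₂)) ⊗ₖ
            ((1 : Matrix (Fin d₂) (Fin d₂) ℂ) - W₂)) := by
      rw [hY, hX]
      simp only [sub_kron, kron_sub, add_kron, kron_add, Matrix.one_kronecker_one]
      module
    rw [hdec]
    exact ((psd_smul_half (psd_kron (psd_kron hA1p hA2m) hW2p)).add
      (psd_smul_half (psd_kron (psd_kron hA1m hA2p) hW2m)))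
  obtain ⟨hPm, hPp, htrpos, htrim⟩ := abs_parts hSH habsP habsSq
  have hcoef : (0:ℂ) ≤ 2⁻¹ := by rw [Complex.le_def]; norm_num
  -- the two key trace inequalities
  have hid1 : Sabs * Y - S * X
      = (2⁻¹ : ℂ) • ((Sabs + S) * (Y - X)) + (2⁻¹ : ℂ) • ((Sabs - S) * (Y + X)) := by
    simp only [Matrix.mul_sub, Matrix.mul_add, Matrix.add_mul, Matrix.sub_mul,
      smul_sub, smul_add]
    module
  have hid2 : Sabs * Y + S * X
      = (2⁻¹ : ℂ) • ((Sabs + S) * (Y + X)) + (2⁻¹ : ℂ) • ((Sabs - S) * (Y - X)) := by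
    simp only [Matrix.mul_sub, Matrix.mul_add, Matrix.add_mul, Matrix.sub_mul,
      smul_sub, smul_add]
    module
  have hw1 : 0 ≤ (Sabs * Y).trace - (S * X).trace := by
    have h := congrArg Matrix.trace hid1
    rw [Matrix.trace_sub, Matrix.trace_add, Matrix.trace_smul, Matrix.trace_smul] at h
    rw [h]
    have t1 := trace_mul_psd_nonneg hPp hYmX
    have t2 := trace_mul_psd_nonneg hPm hYpX
    exact add_nonneg (by simpa [smul_eq_mul] using mul_nonneg hcoef t1)
      (by simpa [smul_eq_mul] using mul_nonneg hcoef t2)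
  have hw2 : 0 ≤ (Sabs * Y).trace + (S * X).trace := by
    have h := congrArg Matrix.trace hid2
    rw [Matrix.trace_add, Matrix.trace_add, Matrix.trace_smul, Matrix.trace_smul] at h
    rw [h]
    have t1 := trace_mul_psd_nonneg hPp hYpX
    have t2 := trace_mul_psd_nonneg hPm hYmX
    exact add_nonneg (by simpa [smul_eq_mul] using mul_nonneg hcoef t1)
      (by simpa [smul_eq_mul] using mul_nonneg hcoef t2)
  rw [Complex.le_def] at hw1 hw2
  simp only [Complex.zero_re, Complex.zero_im, Complex.sub_re, Complex.sub_im,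
    Complex.add_re, Complex.add_im] at hw1 hw2
  -- real/imaginary bookkeeping
  have hzim : (S * X).trace.im = 0 := by linarith [hw1.2, hw2.2]
  have hwim : (Sabs * Y).trace.im = 0 := by linarith [hw1.2, hw2.2]
  -- compute (Sabs * Y).trace
  have hwt : (Sabs * Y).trace = Sabs.trace - (ptr3 Sabs * (A₁ ⊗ₖ A₂)).trace := by
    have e : Y = 1 - (A₁ ⊗ₖ A₂) ⊗ₖ (1 : Matrix (Fin d₂) (Fin d₂) ℂ) := by
      rw [hY, sub_kron, Matrix.one_kronecker_one]
    rw [e, Matrix.mul_sub, Matrix.trace_sub, Matrix.mul_one, trace_ptr3_mul]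
  have htpos : 0 < Sabs.trace.re := htrpos hS0
  have hcim : (ptr3 Sabs * (A₁ ⊗ₖ A₂)).trace.im = 0 := by
    have := congrArg Complex.im hwt
    simp only [Complex.sub_im] at this
    rw [hwim, htrim] at this
    linarith
  have hwre : (Sabs * Y).trace.re
      = Sabs.trace.re - (ptr3 Sabs * (A₁ ⊗ₖ A₂)).trace.re := by
    have := congrArg Complex.re hwt
    simpa [Complex.sub_re] using this
  -- rewrite the goal
  rw [hz]
  have habsz : ‖(S * X).trace‖ = |(S * X).trace.re| := by
    have : (S * X).trace = (((S * X).trace.re : ℝ) : ℂ) := Complex.ext rfl (by simp [hzim])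
    rw [this]
    simp
  rw [habsz]
  -- compute the RHS
  have hrhs : Sabs.trace.re *
      (1 - (((Sabs.trace)⁻¹ • ptr3 Sabs * (A₁ ⊗ₖ A₂)).trace).re)
      = Sabs.trace.re - (ptr3 Sabs * (A₁ ⊗ₖ A₂)).trace.re := by
    have e1 : (Sabs.trace)⁻¹ • ptr3 Sabs * (A₁ ⊗ₖ A₂)
        = (Sabs.trace)⁻¹ • (ptr3 Sabs * (A₁ ⊗ₖ A₂)) := by
      rw [Matrix.smul_mul]
    rw [e1, Matrix.trace_smul, smul_eq_mul]
    have ht : Sabs.trace = ((Sabs.trace.re : ℝ) : ℂ) := Complex.ext rfl (by simp [htrim])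
    rw [ht, ← Complex.ofReal_inv]
    simp only [Complex.ofReal_re, Complex.mul_re, Complex.ofReal_im, zero_mul, sub_zero]
    rw [mul_sub, mul_one, mul_inv_cancel_left₀ htpos.ne']
  rw [hrhs]
  rw [hwre] at hw1 hw2
  rw [abs_le]
  constructor <;> linarith [hw1.1, hw2.1]


end BellPaper
end
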